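/- Let n ≥ 1, m ∈ ℕ ∪ {0}, 0 ≤ α < n, 0 < δ < 1 with mδ < n − α, α̃ = mδ + α, 1 ≤ r ≤ ∞ and δ̃ ≤ δ. A pair of weights (v,w) belongs to the class H(r, α̃, δ̃) if and only if it satisfies both the local condition (L) and the global condition (G) for some finite constants. Quantitatively: if (v,w) ∈ H(r, α̃, δ̃) with constant C then (L) and (G) hold with constant c·C, and conversely if (L) and (G) hold with constant C then (v,w) ∈ H(r, α̃, δ̃) with constant c·C, where c depends only on n, r, α̃, δ, δ̃. -/

import Mathlib

open MeasureTheory Metric ENNReal NNReal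

noncomputable section

/-- Euclidean space `ℝⁿ`. -/
abbrev E (n : ℕ) := EuclideanSpace ℝ (Fin n)

/-- `(∫ f^p dμ)^(1/p)` for finite `p`, and the essential supremum for `p = ∞`. -/
noncomputable def eN {n : ℕ} (p : ℝ≥0∞) (f : E n → ℝ≥0∞) (μ : Measure (E n)) : ℝ≥0∞ :=
  if p = ∞ then essSup f μ else (∫⁻ y, f y ^ p.toReal ∂μ) ^ (1 / p.toReal)

/-- The two-weight class `H(r, αt, δt)` with constant `C`, where `r'` denotes the
conjugate exponent of `r` (so the `r = 1`, `r' = ∞` case is the essential supremum,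
built into `eN`). -/
def Hclass (n : ℕ) (r' : ℝ≥0∞) (αt δ δt : ℝ) (v w : E n → ℝ≥0∞) (C : ℝ≥0∞) : Prop :=
  ∀ (c : E n) (R : ℝ), 0 < R →
    essSup (fun y => (w y)⁻¹) (volume.restrict (ball c R)) *
        volume (ball c R) ^ ((δ - δt) / (n : ℝ)) *
        eN r' (fun y =>
          v y * (volume (ball c R) ^ ((1 : ℝ) / (n : ℝ)) +
            ENNReal.ofReal (dist c y)) ^ (-((n : ℝ) - αt + δ))) volume ≤ C

/-- The local condition (L) with constant `C`. -/
def LocalCond (n : ℕ) (r r' : ℝ≥0∞) (αt δt : ℝ) (v w : E n → ℝ≥0∞) (C : ℝ≥0∞) : Prop :=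
  ∀ (c : E n) (R : ℝ), 0 < R →
    essSup (fun y => (w y)⁻¹) (volume.restrict (ball c R)) *
        volume (ball c R) ^ ((αt - δt) / (n : ℝ) - r⁻¹.toReal) *
        eN r' v ((volume (ball c R))⁻¹ • volume.restrict (ball c R)) ≤ C

/-- The global condition (G) with constant `C`. -/
def GlobalCond (n : ℕ) (r' : ℝ≥0∞) (αt δ δt : ℝ) (v w : E n → ℝ≥0∞) (C : ℝ≥0∞) : Prop :=
  ∀ (c : E n) (R : ℝ), 0 < R →
    essSup (fun y => (w y)⁻¹) (volume.restrict (ball c R)) *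
        volume (ball c R) ^ ((δ - δt) / (n : ℝ)) *
        eN r' (fun y => v y * (ENNReal.ofReal (dist c y)) ^ (-((n : ℝ) - αt + δ)))
          (volume.restrict ((ball c R)ᶜ)) ≤ C

/-- `b ∈ Λ(δ)` with Lipschitz-`δ` constant `Cb`. -/
def LipDelta {n : ℕ} (δ Cb : ℝ) (b : E n → ℝ) : Prop :=
  ∀ x y : E n, |b x - b y| ≤ Cb * dist x y ^ δ

/-- The size condition `S*_α` with constant `A`. -/
def SizeCond (n : ℕ) (α A : ℝ) (K : E n → ℝ) : Prop :=
  ∀ x : E n, x ≠ 0 → |K x| ≤ A * ‖x‖ ^ (α - (n : ℝ))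

/-- The smoothness condition `H*_{α,∞}` with exponent `γ` and constant `A`. -/
def SmoothCond (n : ℕ) (α γ A : ℝ) (K : E n → ℝ) : Prop :=
  ∀ x x' y : E n, 2 * dist x x' ≤ dist x y →
    |K (x - y) - K (x' - y)| + |K (y - x) - K (y - x')| ≤
      A * dist x x' ^ γ / dist x y ^ ((n : ℝ) - α + γ)

namespace St2
variable {n : ℕ}
lemma rpow_ne_top' {x : ℝ≥0∞} (hx0 : x ≠ 0) (hxt : x ≠ ⊤) (y : ℝ) : x ^ y ≠ ⊤ := by
  simp [ENNReal.rpow_eq_top_iff, hx0, hxt]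
lemma rpow_ne_zero' {x : ℝ≥0∞} (hx0 : x ≠ 0) (hxt : x ≠ ⊤) (y : ℝ) : x ^ y ≠ 0 := by
  simp [ENNReal.rpow_eq_zero_iff, hx0, hxt]
lemma eN_mono_ae {p : ℝ≥0∞} {f g : E n → ℝ≥0∞} {μ : Measure (E n)} (h : ∀ᵐ y ∂μ, f y ≤ g y) :
    eN p f μ ≤ eN p g μ := by
  unfold eN
  by_cases hp : p = ⊤
  · simp only [if_pos hp]; exact essSup_mono_ae h
  · simp only [if_neg hp]
    exact ENNReal.rpow_le_rpow (lintegral_mono_ae (h.mono fun y hy =>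
      ENNReal.rpow_le_rpow hy ENNReal.toReal_nonneg)) (by positivity)
lemma eN_const_mul {p : ℝ≥0∞} (hp : p ≠ 0) {a : ℝ≥0∞} (ha : a ≠ ⊤) (f : E n → ℝ≥0∞)
    (μ : Measure (E n)) : eN p (fun y => a * f y) μ = a * eN p f μ := by
  unfold eN
  by_cases h : p = ⊤
  · simp only [if_pos h]; exact essSup_const_mul
  · simp only [if_neg h]
    have ht : 0 < p.toReal := ENNReal.toReal_pos hp h
    have h1 : ∀ y : E n, (a * f y) ^ p.toReal = a ^ p.toReal * f y ^ p.toReal := fun y =>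
      ENNReal.mul_rpow_of_nonneg _ _ ht.le
    simp_rw [h1]
    rw [lintegral_const_mul' _ _ (ENNReal.rpow_ne_top_of_nonneg ht.le ha),
      ENNReal.mul_rpow_of_nonneg _ _ (by positivity : (0:ℝ) ≤ 1 / p.toReal),
      ← ENNReal.rpow_mul, mul_one_div_cancel ht.ne', ENNReal.rpow_one]
lemma eN_smul_measure {p : ℝ≥0∞} (hp : p ≠ 0) {a : ℝ≥0∞} (ha0 : a ≠ 0) (ha : a ≠ ⊤)
    (f : E n → ℝ≥0∞) (μ : Measure (E n)) :
    eN p f (a • μ) = a ^ (p⁻¹.toReal) * eN p f μ := by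
  unfold eN
  by_cases h : p = ⊤
  · rw [if_pos h, if_pos h, essSup_ennreal_smul_measure ha0, h]; simp
  · rw [if_neg h, if_neg h, lintegral_smul_measure, smul_eq_mul,
      ENNReal.mul_rpow_of_nonneg _ _ (by positivity : (0:ℝ) ≤ 1 / p.toReal),
      ENNReal.toReal_inv, one_div]
lemma eN_restrict_le {p : ℝ≥0∞} (f : E n → ℝ≥0∞) (μ : Measure (E n)) (A : Set (E n)) :
    eN p f (μ.restrict A) ≤ eN p f μ := by
  unfold eN
  by_cases h : p = ⊤
  · simp only [if_pos h]
    exact essSup_mono_measure (Measure.absolutelyContinuous_of_le Measure.restrict_le_self)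
  · simp only [if_neg h]
    exact ENNReal.rpow_le_rpow (lintegral_mono' Measure.restrict_le_self le_rfl) (by positivity)
lemma essSup_add_measure_le (f : E n → ℝ≥0∞) (μ ν : Measure (E n)) :
    essSup f (μ + ν) ≤ essSup f μ + essSup f ν := by
  refine essSup_le_of_ae_le _ (ae_add_measure_iff.mpr ?_)
  exact ⟨(ae_le_essSup f).mono fun y hy => hy.trans le_self_add,
    (ae_le_essSup f).mono fun y hy => hy.trans le_add_self⟩
lemma eN_add_compl {p : ℝ≥0∞} (hp : 1 ≤ p) (f : E n → ℝ≥0∞) {B : Set (E n)}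
    (hB : MeasurableSet B) :
    eN p f volume ≤ eN p f (volume.restrict B) + eN p f (volume.restrict Bᶜ) := by
  unfold eN
  by_cases h : p = ⊤
  · simp only [if_pos h]
    conv_lhs => rw [← Measure.restrict_add_restrict_compl (μ := volume) hB]
    exact essSup_add_measure_le f _ _
  · simp only [if_neg h]
    have ht : 1 ≤ p.toReal := by
      rw [← ENNReal.toReal_one]; exact ENNReal.toReal_mono h hp
    rw [← lintegral_add_compl (fun y => f y ^ p.toReal) hB]
    exact ENNReal.rpow_add_le_add_rpow _ _ (by positivity) (by
      rw [div_le_one (by linarith)]; exact ht)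
end St2

/-- `(v,w) ∈ H(r, α̃, δ̃)` is quantitatively equivalent to the local
condition (L) together with the global condition (G). -/
theorem statement2 (n m : ℕ) (α δ δt αt : ℝ) (r r' : ℝ≥0∞)
    (hn : 1 ≤ n) (hα0 : 0 ≤ α) (hαn : α < (n : ℝ)) (hδ0 : 0 < δ) (hδ1 : δ < 1)
    (hmδ : (m : ℝ) * δ < (n : ℝ) - α) (hαt : αt = (m : ℝ) * δ + α)
    (hr : 1 ≤ r) (hconj : r⁻¹ + r'⁻¹ = 1) (hδt : δt ≤ δ) :
    ∃ c : ℝ≥0, 0 < c ∧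
      ∀ (v w : E n → ℝ≥0∞), Measurable v → Measurable w → ∀ C : ℝ≥0,
        (Hclass n r' αt δ δt v w (C : ℝ≥0∞) →
          LocalCond n r r' αt δt v w ((c : ℝ≥0∞) * C) ∧
            GlobalCond n r' αt δ δt v w ((c : ℝ≥0∞) * C)) ∧
        ((LocalCond n r r' αt δt v w (C : ℝ≥0∞) ∧
            GlobalCond n r' αt δ δt v w (C : ℝ≥0∞)) →
          Hclass n r' αt δ δt v w ((c : ℝ≥0∞) * C)) := by
  classical
  simp only [Hclass, LocalCond, GlobalCond]
  have hnn : (n : ℝ) ≠ 0 := Nat.cast_ne_zero.mpr (by omega)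
  haveI : Nonempty (Fin n) := ⟨⟨0, hn⟩⟩
  set s : ℝ := (n : ℝ) - αt + δ with hs_def
  have hs : 0 < s := by rw [hs_def, hαt]; linarith
  set ωE : ℝ≥0∞ := volume (ball (0 : E n) 1) with hωE_def
  have hω0 : ωE ≠ 0 := (measure_ball_pos volume _ one_pos).ne'
  have hωt : ωE ≠ ⊤ := measure_ball_lt_top.ne
  set ρ : ℝ≥0∞ := ωE ^ ((1:ℝ)/(n:ℝ)) with hρ_def
  have hρ0 : ρ ≠ 0 := St2.rpow_ne_zero' hω0 hωt _
  have hρt : ρ ≠ ⊤ := St2.rpow_ne_top' hω0 hωt _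
  set σ : ℝ≥0∞ := ρ + 1 with hσ_def
  have hσ0 : σ ≠ 0 := by simp [hσ_def]
  have hσt : σ ≠ ⊤ := ENNReal.add_ne_top.mpr ⟨hρt, ENNReal.one_ne_top⟩
  have hσcan : σ ^ s * σ ^ (-s) = 1 := by
    rw [← ENNReal.rpow_add _ _ hσ0 hσt]; simp
  have hr0 : r ≠ 0 := (zero_lt_one.trans_le hr).ne'
  have hr'0 : r' ≠ 0 := by
    intro h; rw [h] at hconj; simp at hconj
  have hr'1 : 1 ≤ r' := ENNReal.inv_le_one.mp (le_of_le_of_eq le_add_self hconj)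
  set i : ℝ := r⁻¹.toReal with hi_def
  set i' : ℝ := r'⁻¹.toReal with hi'_def
  have hii : i + i' = 1 := by
    have h1 : r⁻¹ ≠ ⊤ := ENNReal.inv_ne_top.mpr hr0
    have h2 : r'⁻¹ ≠ ⊤ := ENNReal.inv_ne_top.mpr hr'0
    have h3 := congrArg ENNReal.toReal hconj
    rwa [ENNReal.toReal_add h1 h2, ENNReal.toReal_one] at h3
  have hnii : (n:ℝ) * i + (n:ℝ) * i' = (n:ℝ) := by
    rw [← mul_add, hii, mul_one]
  set T : ℝ := (δ - δt) / (n : ℝ) with hT_def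
  set A : ℝ := (αt - δt) / (n : ℝ) - i with hA_def
  set e1 : ℝ := A - i' - T with he1_def
  have ex1 : (n:ℝ) * (A + -i') + s = (n:ℝ) * T := by
    have h1 : (n:ℝ) * (A + -i') = (αt - δt) - ((n:ℝ)*i + (n:ℝ)*i') := by
      rw [hA_def]; field_simp; ring
    have h2 : (n:ℝ) * T = δ - δt := by rw [hT_def]; field_simp
    rw [h1, h2, hnii, hs_def]; ring
  have ex1' : (n:ℝ) * (T + i') + -s = (n:ℝ) * A := by
    have h1 : (n:ℝ) * (T + i') = (δ - δt) + (n:ℝ)*i' := by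
      rw [hT_def]; field_simp
    have h2 : (n:ℝ) * A = (αt - δt) - (n:ℝ)*i := by
      rw [hA_def]; field_simp
    rw [h1, h2, hs_def]; linarith [hnii]
  set c0 : ℝ≥0∞ := σ ^ s * (1 + ωE ^ e1) + ρ ^ (-s) * ωE ^ (-e1) + 1 with hc0_def
  have hc0t : c0 ≠ ⊤ := by
    rw [hc0_def]
    refine ENNReal.add_ne_top.mpr ⟨ENNReal.add_ne_top.mpr ⟨?_, ?_⟩, ENNReal.one_ne_top⟩
    · exact ENNReal.mul_ne_top (St2.rpow_ne_top' hσ0 hσt _)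
        (ENNReal.add_ne_top.mpr ⟨ENNReal.one_ne_top, St2.rpow_ne_top' hω0 hωt _⟩)
    · exact ENNReal.mul_ne_top (St2.rpow_ne_top' hρ0 hρt _) (St2.rpow_ne_top' hω0 hωt _)
  have hc01 : 1 ≤ c0 := by rw [hc0_def]; exact le_add_self
  have hc00 : c0 ≠ 0 := (zero_lt_one.trans_le hc01).ne'
  refine ⟨c0.toNNReal, ENNReal.toNNReal_pos hc00 hc0t, ?_⟩
  have hcoe : ((c0.toNNReal : ℝ≥0) : ℝ≥0∞) = c0 := ENNReal.coe_toNNReal hc0t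
  intro v w hv hw C
  rw [hcoe]
  constructor
  · -- H ⇒ L ∧ G
    intro hH
    constructor
    · -- Local condition
      intro cc R hR
      have hH' := hH cc R hR
      set W := essSup (fun y => (w y)⁻¹) (volume.restrict (ball cc R)) with hW_def
      set μB := volume (ball cc R) with hμB_def
      have hμ0 : μB ≠ 0 := (measure_ball_pos volume _ hR).ne'
      have hμt : μB ≠ ⊤ := measure_ball_lt_top.ne
      set rR : ℝ≥0∞ := ENNReal.ofReal R with hrR_def
      have hrR0 : rR ≠ 0 := (ENNReal.ofReal_pos.mpr hR).ne'
      have hrRt : rR ≠ ⊤ := ENNReal.ofReal_ne_top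
      have hball : ∀ a : ℝ, μB ^ a = rR ^ ((n:ℝ) * a) * ωE ^ a := by
        intro a
        have h1 : μB = rR ^ (n:ℝ) * ωE := by
          rw [hμB_def, hrR_def, hωE_def, Measure.addHaar_ball volume cc hR.le,
            finrank_euclideanSpace_fin, ← Real.rpow_natCast R n,
            ← ENNReal.ofReal_rpow_of_pos hR]
        rw [h1, ENNReal.mul_rpow_of_ne_top (St2.rpow_ne_top' hrR0 hrRt _) hωt,
          ← ENNReal.rpow_mul]
      have hbase : μB ^ ((1:ℝ)/(n:ℝ)) = rR * ρ := by
        rw [hball, hρ_def]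
        congr 1
        rw [mul_one_div, div_self hnn, ENNReal.rpow_one]
      have hrcan : rR ^ s * rR ^ (-s) = 1 := by
        rw [← ENNReal.rpow_add _ _ hrR0 hrRt]; simp
      have hKey1 : μB ^ A * μB ^ (-i') * rR ^ s = ωE ^ e1 * μB ^ T := by
        rw [← ENNReal.rpow_add _ _ hμ0 hμt, hball (A + -i'), hball T]
        have hcb1 : rR ^ ((n:ℝ) * (A + -i')) * ωE ^ (A + -i') * rR ^ s
            = rR ^ ((n:ℝ) * (A + -i') + s) * ωE ^ (A + -i') := by
          rw [mul_right_comm, ← ENNReal.rpow_add _ _ hrR0 hrRt]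
        have hcb2 : ωE ^ e1 * (rR ^ ((n:ℝ) * T) * ωE ^ T)
            = rR ^ ((n:ℝ) * T) * ωE ^ (e1 + T) := by
          rw [mul_left_comm, ← ENNReal.rpow_add _ _ hω0 hωt]
        rw [hcb1, hcb2, ex1, show A + -i' = e1 + T by rw [he1_def]; ring]
      have hsmul : eN r' v (μB⁻¹ • volume.restrict (ball cc R))
          = μB ^ (-i') * eN r' v (volume.restrict (ball cc R)) := by
        rw [St2.eN_smul_measure hr'0 (ENNReal.inv_ne_zero.mpr hμt)
          (ENNReal.inv_ne_top.mpr hμ0) v _, ENNReal.inv_rpow, ← ENNReal.rpow_neg, hi'_def]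
      have hptB : ∀ y ∈ ball cc R, v y ≤ (σ ^ s * rR ^ s) *
          (v y * (μB ^ ((1:ℝ)/(n:ℝ)) + ENNReal.ofReal (dist cc y)) ^ (-s)) := by
        intro y hy
        have hdr : ENNReal.ofReal (dist cc y) ≤ rR := by
          rw [hrR_def]
          exact ENNReal.ofReal_le_ofReal (by rw [dist_comm]; exact (mem_ball.mp hy).le)
        have hbl : μB ^ ((1:ℝ)/(n:ℝ)) + ENNReal.ofReal (dist cc y) ≤ rR * σ := by
          rw [hbase, hσ_def, mul_add, mul_one]
          exact add_le_add le_rfl hdr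
        have h2 : (rR * σ) ^ (-s) ≤ (μB ^ ((1:ℝ)/(n:ℝ)) + ENNReal.ofReal (dist cc y)) ^ (-s) := by
          rw [ENNReal.rpow_neg, ENNReal.rpow_neg]
          exact ENNReal.inv_le_inv.mpr (ENNReal.rpow_le_rpow hbl hs.le)
        have hcan : (σ ^ s * rR ^ s) * ((rR * σ) ^ (-s)) = 1 := by
          rw [ENNReal.mul_rpow_of_ne_top hrRt hσt]
          calc (σ ^ s * rR ^ s) * (rR ^ (-s) * σ ^ (-s))
              = (σ ^ s * σ ^ (-s)) * (rR ^ s * rR ^ (-s)) := by ring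
            _ = 1 := by rw [hσcan, hrcan, mul_one]
        calc v y = v y * ((σ ^ s * rR ^ s) * ((rR * σ) ^ (-s))) := by rw [hcan, mul_one]
          _ ≤ v y * ((σ ^ s * rR ^ s) *
              ((μB ^ ((1:ℝ)/(n:ℝ)) + ENNReal.ofReal (dist cc y)) ^ (-s))) :=
            mul_le_mul_right (mul_le_mul_right h2 _) _
          _ = (σ ^ s * rR ^ s) *
              (v y * (μB ^ ((1:ℝ)/(n:ℝ)) + ENNReal.ofReal (dist cc y)) ^ (-s)) := by ring
      have h4 : eN r' v (volume.restrict (ball cc R)) ≤ (σ ^ s * rR ^ s) *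
          eN r' (fun y => v y * (μB ^ ((1:ℝ)/(n:ℝ)) + ENNReal.ofReal (dist cc y)) ^ (-s))
            volume := by
        calc eN r' v (volume.restrict (ball cc R))
            ≤ eN r' (fun y => (σ ^ s * rR ^ s) *
                (v y * (μB ^ ((1:ℝ)/(n:ℝ)) + ENNReal.ofReal (dist cc y)) ^ (-s)))
              (volume.restrict (ball cc R)) :=
            St2.eN_mono_ae (ae_restrict_of_forall_mem measurableSet_ball hptB)
          _ = (σ ^ s * rR ^ s) * eN r'
                (fun y => v y * (μB ^ ((1:ℝ)/(n:ℝ)) + ENNReal.ofReal (dist cc y)) ^ (-s))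
                (volume.restrict (ball cc R)) :=
            St2.eN_const_mul hr'0
              (ENNReal.mul_ne_top (St2.rpow_ne_top' hσ0 hσt _) (St2.rpow_ne_top' hrR0 hrRt _)) _ _
          _ ≤ _ := mul_le_mul_right (St2.eN_restrict_le _ _ _) _
      have hfin : σ ^ s * ωE ^ e1 ≤ c0 := by
        rw [hc0_def]
        calc σ ^ s * ωE ^ e1 ≤ σ ^ s * (1 + ωE ^ e1) :=
            mul_le_mul_right le_add_self _
          _ ≤ _ := le_self_add.trans le_self_add
      calc W * μB ^ A * eN r' v (μB⁻¹ • volume.restrict (ball cc R))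
          = W * μB ^ A * (μB ^ (-i') * eN r' v (volume.restrict (ball cc R))) := by rw [hsmul]
        _ ≤ W * μB ^ A * (μB ^ (-i') * ((σ ^ s * rR ^ s) *
            eN r' (fun y => v y * (μB ^ ((1:ℝ)/(n:ℝ)) + ENNReal.ofReal (dist cc y)) ^ (-s))
              volume)) := mul_le_mul_right (mul_le_mul_right h4 _) _
        _ = (σ ^ s) * ((μB ^ A * μB ^ (-i') * rR ^ s) * (W *
            eN r' (fun y => v y * (μB ^ ((1:ℝ)/(n:ℝ)) + ENNReal.ofReal (dist cc y)) ^ (-s))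
              volume)) := by ring
        _ = (σ ^ s) * ((ωE ^ e1 * μB ^ T) * (W *
            eN r' (fun y => v y * (μB ^ ((1:ℝ)/(n:ℝ)) + ENNReal.ofReal (dist cc y)) ^ (-s))
              volume)) := by rw [hKey1]
        _ = (σ ^ s * ωE ^ e1) * (W * μB ^ T *
            eN r' (fun y => v y * (μB ^ ((1:ℝ)/(n:ℝ)) + ENNReal.ofReal (dist cc y)) ^ (-s))
              volume) := by ring
        _ ≤ (σ ^ s * ωE ^ e1) * ↑C := mul_le_mul_right hH' _
        _ ≤ c0 * ↑C := mul_le_mul_left hfin _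
    · -- Global condition
      intro cc R hR
      have hH' := hH cc R hR
      set W := essSup (fun y => (w y)⁻¹) (volume.restrict (ball cc R)) with hW_def
      set μB := volume (ball cc R) with hμB_def
      have hμ0 : μB ≠ 0 := (measure_ball_pos volume _ hR).ne'
      have hμt : μB ≠ ⊤ := measure_ball_lt_top.ne
      set rR : ℝ≥0∞ := ENNReal.ofReal R with hrR_def
      have hrR0 : rR ≠ 0 := (ENNReal.ofReal_pos.mpr hR).ne'
      have hrRt : rR ≠ ⊤ := ENNReal.ofReal_ne_top
      have hball : ∀ a : ℝ, μB ^ a = rR ^ ((n:ℝ) * a) * ωE ^ a := by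
        intro a
        have h1 : μB = rR ^ (n:ℝ) * ωE := by
          rw [hμB_def, hrR_def, hωE_def, Measure.addHaar_ball volume cc hR.le,
            finrank_euclideanSpace_fin, ← Real.rpow_natCast R n,
            ← ENNReal.ofReal_rpow_of_pos hR]
        rw [h1, ENNReal.mul_rpow_of_ne_top (St2.rpow_ne_top' hrR0 hrRt _) hωt,
          ← ENNReal.rpow_mul]
      have hbase : μB ^ ((1:ℝ)/(n:ℝ)) = rR * ρ := by
        rw [hball, hρ_def]
        congr 1
        rw [mul_one_div, div_self hnn, ENNReal.rpow_one]
      have hpt : ∀ y ∈ (ball cc R)ᶜ,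
          v y * ENNReal.ofReal (dist cc y) ^ (-s) ≤
            σ ^ s * (v y * (μB ^ ((1:ℝ)/(n:ℝ)) + ENNReal.ofReal (dist cc y)) ^ (-s)) := by
        intro y hy
        have hdt : ENNReal.ofReal (dist cc y) ≠ ⊤ := ENNReal.ofReal_ne_top
        have hrd : rR ≤ ENNReal.ofReal (dist cc y) := by
          rw [hrR_def]
          refine ENNReal.ofReal_le_ofReal ?_
          have hy' : ¬ dist y cc < R := by simpa [mem_ball] using hy
          rw [dist_comm]; linarith [not_lt.mp hy']
        have hbl : μB ^ ((1:ℝ)/(n:ℝ)) + ENNReal.ofReal (dist cc y) ≤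
            ENNReal.ofReal (dist cc y) * σ := by
          rw [hbase, hσ_def, mul_add, mul_one]
          exact add_le_add (mul_le_mul_left hrd ρ) le_rfl
        have h2 : (ENNReal.ofReal (dist cc y) * σ) ^ (-s) ≤
            (μB ^ ((1:ℝ)/(n:ℝ)) + ENNReal.ofReal (dist cc y)) ^ (-s) := by
          rw [ENNReal.rpow_neg, ENNReal.rpow_neg]
          exact ENNReal.inv_le_inv.mpr (ENNReal.rpow_le_rpow hbl hs.le)
        have hcan : σ ^ s * ((ENNReal.ofReal (dist cc y) * σ) ^ (-s))
            = ENNReal.ofReal (dist cc y) ^ (-s) := by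
          rw [ENNReal.mul_rpow_of_ne_top hdt hσt]
          calc σ ^ s * (ENNReal.ofReal (dist cc y) ^ (-s) * σ ^ (-s))
              = (σ ^ s * σ ^ (-s)) * ENNReal.ofReal (dist cc y) ^ (-s) := by ring
            _ = _ := by rw [hσcan, one_mul]
        calc v y * ENNReal.ofReal (dist cc y) ^ (-s)
            = v y * (σ ^ s * ((ENNReal.ofReal (dist cc y) * σ) ^ (-s))) := by rw [hcan]
          _ ≤ v y * (σ ^ s * ((μB ^ ((1:ℝ)/(n:ℝ)) + ENNReal.ofReal (dist cc y)) ^ (-s))) :=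
            mul_le_mul_right (mul_le_mul_right h2 _) _
          _ = σ ^ s * (v y * (μB ^ ((1:ℝ)/(n:ℝ)) + ENNReal.ofReal (dist cc y)) ^ (-s)) := by
            ring
      have h3 : eN r' (fun y => v y * ENNReal.ofReal (dist cc y) ^ (-s))
          (volume.restrict ((ball cc R)ᶜ)) ≤ σ ^ s *
          eN r' (fun y => v y * (μB ^ ((1:ℝ)/(n:ℝ)) + ENNReal.ofReal (dist cc y)) ^ (-s))
            volume := by
        calc eN r' (fun y => v y * ENNReal.ofReal (dist cc y) ^ (-s))
              (volume.restrict ((ball cc R)ᶜ))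
            ≤ eN r' (fun y => σ ^ s *
                (v y * (μB ^ ((1:ℝ)/(n:ℝ)) + ENNReal.ofReal (dist cc y)) ^ (-s)))
              (volume.restrict ((ball cc R)ᶜ)) :=
            St2.eN_mono_ae (ae_restrict_of_forall_mem measurableSet_ball.compl hpt)
          _ = σ ^ s * eN r'
                (fun y => v y * (μB ^ ((1:ℝ)/(n:ℝ)) + ENNReal.ofReal (dist cc y)) ^ (-s))
                (volume.restrict ((ball cc R)ᶜ)) :=
            St2.eN_const_mul hr'0 (St2.rpow_ne_top' hσ0 hσt _) _ _
          _ ≤ _ := mul_le_mul_right (St2.eN_restrict_le _ _ _) _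
      have hfin : σ ^ s ≤ c0 := by
        rw [hc0_def]
        calc σ ^ s = σ ^ s * 1 := (mul_one _).symm
          _ ≤ σ ^ s * (1 + ωE ^ e1) := mul_le_mul_right le_self_add _
          _ ≤ _ := le_self_add.trans le_self_add
      calc W * μB ^ T * eN r' (fun y => v y * ENNReal.ofReal (dist cc y) ^ (-s))
            (volume.restrict ((ball cc R)ᶜ))
          ≤ W * μB ^ T * (σ ^ s *
            eN r' (fun y => v y * (μB ^ ((1:ℝ)/(n:ℝ)) + ENNReal.ofReal (dist cc y)) ^ (-s))
              volume) := mul_le_mul_right h3 _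
        _ = σ ^ s * (W * μB ^ T *
            eN r' (fun y => v y * (μB ^ ((1:ℝ)/(n:ℝ)) + ENNReal.ofReal (dist cc y)) ^ (-s))
              volume) := by ring
        _ ≤ σ ^ s * ↑C := mul_le_mul_right hH' _
        _ ≤ c0 * ↑C := mul_le_mul_left hfin _
  · -- L ∧ G ⇒ H
    rintro ⟨hL, hG⟩
    intro cc R hR
    have hL' := hL cc R hR
    have hG' := hG cc R hR
    set W := essSup (fun y => (w y)⁻¹) (volume.restrict (ball cc R)) with hW_def
    set μB := volume (ball cc R) with hμB_def
    have hμ0 : μB ≠ 0 := (measure_ball_pos volume _ hR).ne'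
    have hμt : μB ≠ ⊤ := measure_ball_lt_top.ne
    set rR : ℝ≥0∞ := ENNReal.ofReal R with hrR_def
    have hrR0 : rR ≠ 0 := (ENNReal.ofReal_pos.mpr hR).ne'
    have hrRt : rR ≠ ⊤ := ENNReal.ofReal_ne_top
    have hball : ∀ a : ℝ, μB ^ a = rR ^ ((n:ℝ) * a) * ωE ^ a := by
      intro a
      have h1 : μB = rR ^ (n:ℝ) * ωE := by
        rw [hμB_def, hrR_def, hωE_def, Measure.addHaar_ball volume cc hR.le,
          finrank_euclideanSpace_fin, ← Real.rpow_natCast R n,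
          ← ENNReal.ofReal_rpow_of_pos hR]
      rw [h1, ENNReal.mul_rpow_of_ne_top (St2.rpow_ne_top' hrR0 hrRt _) hωt,
        ← ENNReal.rpow_mul]
    have hbase : μB ^ ((1:ℝ)/(n:ℝ)) = rR * ρ := by
      rw [hball, hρ_def]
      congr 1
      rw [mul_one_div, div_self hnn, ENNReal.rpow_one]
    have hKey2 : μB ^ T * rR ^ (-s) * μB ^ i' = ωE ^ (-e1) * μB ^ A := by
      have hswap : μB ^ T * rR ^ (-s) * μB ^ i' = μB ^ T * μB ^ i' * rR ^ (-s) := by ring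
      rw [hswap, ← ENNReal.rpow_add _ _ hμ0 hμt, hball (T + i'), hball A]
      have hcb1 : rR ^ ((n:ℝ) * (T + i')) * ωE ^ (T + i') * rR ^ (-s)
          = rR ^ ((n:ℝ) * (T + i') + -s) * ωE ^ (T + i') := by
        rw [mul_right_comm, ← ENNReal.rpow_add _ _ hrR0 hrRt]
      have hcb2 : ωE ^ (-e1) * (rR ^ ((n:ℝ) * A) * ωE ^ A)
          = rR ^ ((n:ℝ) * A) * ωE ^ (-e1 + A) := by
        rw [mul_left_comm, ← ENNReal.rpow_add _ _ hω0 hωt]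
      rw [hcb1, hcb2, ex1', show T + i' = -e1 + A by rw [he1_def]; ring]
    have hsmul : eN r' v (μB⁻¹ • volume.restrict (ball cc R))
        = μB ^ (-i') * eN r' v (volume.restrict (ball cc R)) := by
      rw [St2.eN_smul_measure hr'0 (ENNReal.inv_ne_zero.mpr hμt)
        (ENNReal.inv_ne_top.mpr hμ0) v _, ENNReal.inv_rpow, ← ENNReal.rpow_neg, hi'_def]
    have heNB : eN r' v (volume.restrict (ball cc R))
        = μB ^ i' * eN r' v (μB⁻¹ • volume.restrict (ball cc R)) := by
      rw [hsmul, ← mul_assoc, ← ENNReal.rpow_add _ _ hμ0 hμt]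
      simp
    have hsplit := St2.eN_add_compl (p := r') hr'1
      (fun y => v y * (μB ^ ((1:ℝ)/(n:ℝ)) + ENNReal.ofReal (dist cc y)) ^ (-s))
      (measurableSet_ball (x := cc) (ε := R))
    have hup1 : ∀ y : E n, v y * (μB ^ ((1:ℝ)/(n:ℝ)) + ENNReal.ofReal (dist cc y)) ^ (-s)
        ≤ (ρ ^ (-s) * rR ^ (-s)) * v y := by
      intro y
      have h2 : (μB ^ ((1:ℝ)/(n:ℝ)) + ENNReal.ofReal (dist cc y)) ^ (-s) ≤ (rR * ρ) ^ (-s) := by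
        rw [ENNReal.rpow_neg, ENNReal.rpow_neg]
        refine ENNReal.inv_le_inv.mpr (ENNReal.rpow_le_rpow ?_ hs.le)
        rw [hbase]; exact le_self_add
      calc v y * (μB ^ ((1:ℝ)/(n:ℝ)) + ENNReal.ofReal (dist cc y)) ^ (-s)
          ≤ v y * (rR * ρ) ^ (-s) := mul_le_mul_right h2 _
        _ = (ρ ^ (-s) * rR ^ (-s)) * v y := by
          rw [ENNReal.mul_rpow_of_ne_top hrRt hρt]; ring
    have hterm1 : eN r'
        (fun y => v y * (μB ^ ((1:ℝ)/(n:ℝ)) + ENNReal.ofReal (dist cc y)) ^ (-s))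
        (volume.restrict (ball cc R)) ≤ (ρ ^ (-s) * rR ^ (-s)) *
        (μB ^ i' * eN r' v (μB⁻¹ • volume.restrict (ball cc R))) := by
      calc eN r' (fun y => v y * (μB ^ ((1:ℝ)/(n:ℝ)) + ENNReal.ofReal (dist cc y)) ^ (-s))
            (volume.restrict (ball cc R))
          ≤ eN r' (fun y => (ρ ^ (-s) * rR ^ (-s)) * v y) (volume.restrict (ball cc R)) :=
          St2.eN_mono_ae (ae_of_all _ hup1)
        _ = (ρ ^ (-s) * rR ^ (-s)) * eN r' v (volume.restrict (ball cc R)) :=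
          St2.eN_const_mul hr'0
            (ENNReal.mul_ne_top (St2.rpow_ne_top' hρ0 hρt _) (St2.rpow_ne_top' hrR0 hrRt _)) _ _
        _ = _ := by rw [heNB]
    have hup2 : ∀ y : E n, v y * (μB ^ ((1:ℝ)/(n:ℝ)) + ENNReal.ofReal (dist cc y)) ^ (-s)
        ≤ v y * ENNReal.ofReal (dist cc y) ^ (-s) := by
      intro y
      refine mul_le_mul_right ?_ _
      rw [ENNReal.rpow_neg, ENNReal.rpow_neg]
      exact ENNReal.inv_le_inv.mpr (ENNReal.rpow_le_rpow le_add_self hs.le)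
    have hterm2 : eN r'
        (fun y => v y * (μB ^ ((1:ℝ)/(n:ℝ)) + ENNReal.ofReal (dist cc y)) ^ (-s))
        (volume.restrict ((ball cc R)ᶜ)) ≤
        eN r' (fun y => v y * ENNReal.ofReal (dist cc y) ^ (-s))
          (volume.restrict ((ball cc R)ᶜ)) :=
      St2.eN_mono_ae (ae_of_all _ hup2)
    have hfin : ρ ^ (-s) * ωE ^ (-e1) + 1 ≤ c0 := by
      rw [hc0_def]
      exact add_le_add_left le_add_self 1
    calc W * μB ^ T * eN r'
          (fun y => v y * (μB ^ ((1:ℝ)/(n:ℝ)) + ENNReal.ofReal (dist cc y)) ^ (-s)) volume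
        ≤ W * μB ^ T * (eN r'
            (fun y => v y * (μB ^ ((1:ℝ)/(n:ℝ)) + ENNReal.ofReal (dist cc y)) ^ (-s))
            (volume.restrict (ball cc R)) + eN r'
            (fun y => v y * (μB ^ ((1:ℝ)/(n:ℝ)) + ENNReal.ofReal (dist cc y)) ^ (-s))
            (volume.restrict ((ball cc R)ᶜ))) := mul_le_mul_right hsplit _
      _ ≤ W * μB ^ T * ((ρ ^ (-s) * rR ^ (-s)) *
            (μB ^ i' * eN r' v (μB⁻¹ • volume.restrict (ball cc R))) +
            eN r' (fun y => v y * ENNReal.ofReal (dist cc y) ^ (-s))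
              (volume.restrict ((ball cc R)ᶜ))) :=
          mul_le_mul_right (add_le_add hterm1 hterm2) _
      _ = ρ ^ (-s) * ((μB ^ T * rR ^ (-s) * μB ^ i') *
            (W * eN r' v (μB⁻¹ • volume.restrict (ball cc R)))) +
            W * μB ^ T * eN r' (fun y => v y * ENNReal.ofReal (dist cc y) ^ (-s))
              (volume.restrict ((ball cc R)ᶜ)) := by ring
      _ = ρ ^ (-s) * ((ωE ^ (-e1) * μB ^ A) *
            (W * eN r' v (μB⁻¹ • volume.restrict (ball cc R)))) +
            W * μB ^ T * eN r' (fun y => v y * ENNReal.ofReal (dist cc y) ^ (-s))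
              (volume.restrict ((ball cc R)ᶜ)) := by rw [hKey2]
      _ = (ρ ^ (-s) * ωE ^ (-e1)) *
            (W * μB ^ A * eN r' v (μB⁻¹ • volume.restrict (ball cc R))) +
            W * μB ^ T * eN r' (fun y => v y * ENNReal.ofReal (dist cc y) ^ (-s))
              (volume.restrict ((ball cc R)ᶜ)) := by ring
      _ ≤ (ρ ^ (-s) * ωE ^ (-e1)) * ↑C + 1 * ↑C := by
          refine add_le_add (mul_le_mul_right hL' _) ?_
          rw [one_mul]; exact hG'
      _ = (ρ ^ (-s) * ωE ^ (-e1) + 1) * ↑C := by ring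
      _ ≤ c0 * ↑C := mul_le_mul_left hfin _
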